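/- Let b ≥ 2 be an integer and let Z ⊂ ℂ be countable, symmetric with respect to the real axis, and exponentially b-nonresonant. Then the set {t ≥ 0 : e^{tZ} is b-resonant} is countable. -/

import Mathlib

open MeasureTheory Filter Set
open scoped Classical

/-- Base-`b` significand: `S_b(x) ∈ [1,b)` with `|x| = S_b(x)·b^k`; `S_b(0)=0`. -/
noncomputable def significand (b : ℕ) (x : ℝ) : ℝ :=
  if x = 0 then 0 else |x| / (b : ℝ) ^ (Int.log b |x|)

/-- `f` is `b`-Benford. -/
noncomputable def IsBenford (b : ℕ) (f : ℝ → ℝ) : Prop :=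
  ∀ s : ℝ, 1 ≤ s → s < (b : ℝ) →
    Tendsto (fun T : ℝ =>
        (volume {t : ℝ | 0 ≤ t ∧ t ≤ T ∧ significand b (f t) ≤ s}).toReal / T)
      atTop (nhds (Real.logb b s))

/-- A subset of the circle `ℝ/ℤ` is an arc if it is the image of an interval. -/
def IsArc (J : Set UnitAddCircle) : Prop :=
  ∃ a c : ℝ, J = (fun x : ℝ => (x : UnitAddCircle)) '' Set.Ico a c

/-- `f` is continuously uniformly distributed mod 1. -/
noncomputable def CUDMod1 (f : ℝ → ℝ) : Prop :=
  ∀ J : Set UnitAddCircle, IsArc J →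
    Tendsto (fun T : ℝ =>
        (volume {t : ℝ | 0 ≤ t ∧ t ≤ T ∧ ((f t : UnitAddCircle) ∈ J)}).toReal / T)
      atTop (nhds ((volume J).toReal))

/-- A sequence (indexed from 1) is uniformly distributed mod 1. -/
noncomputable def UDMod1 (x : ℕ → ℝ) : Prop :=
  ∀ J : Set UnitAddCircle, IsArc J →
    Tendsto (fun N : ℕ =>
        ((Finset.Icc 1 N).filter (fun n => ((x n : UnitAddCircle) ∈ J))).card / (N : ℝ))
      atTop (nhds ((volume J).toReal))


lemma arg_exp_aux (w : ℂ) : ∃ k : ℤ, Complex.arg (Complex.exp w) = w.im + 2 * Real.pi * k := by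
  have h2 : (↑‖Complex.exp w‖ : ℂ)
      * Complex.exp (Complex.arg (Complex.exp w) * Complex.I) = Complex.exp w :=
    Complex.norm_mul_exp_arg_mul_I _
  rw [Complex.norm_exp] at h2
  have h3 : Complex.exp w = ↑(Real.exp w.re) * Complex.exp (↑w.im * Complex.I) := by
    rw [Complex.ofReal_exp, ← Complex.exp_add]
    congr 1
    exact (Complex.re_add_im w).symm
  have hre : (Real.exp w.re : ℂ) ≠ 0 := by
    exact_mod_cast (Real.exp_pos w.re).ne'
  have h4 : Complex.exp (↑(Complex.arg (Complex.exp w)) * Complex.I)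
      = Complex.exp (↑w.im * Complex.I) :=
    mul_left_cancel₀ hre (h2.trans h3)
  obtain ⟨n, hn⟩ := Complex.exp_eq_exp_iff_exists_int.mp h4
  refine ⟨n, ?_⟩
  have := congrArg Complex.im hn
  simp at this
  linarith

lemma arg_exp_real (t : ℝ) (z : ℂ) :
    ∃ k : ℤ, Complex.arg (Complex.exp (↑t * z)) = t * z.im + 2 * Real.pi * k := by
  obtain ⟨k, hk⟩ := arg_exp_aux (↑t * z)
  exact ⟨k, by simpa using hk⟩

lemma arg_exp_eq_of_im_eq (t : ℝ) {u v : ℂ} (h : u.im = v.im) :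
    Complex.arg (Complex.exp (↑t * u)) = Complex.arg (Complex.exp (↑t * v)) := by
  obtain ⟨k, hk⟩ := arg_exp_real t u
  obtain ⟨l, hl⟩ := arg_exp_real t v
  have b1 := Complex.neg_pi_lt_arg (Complex.exp (↑t * u))
  have b2 := Complex.arg_le_pi (Complex.exp (↑t * u))
  have b3 := Complex.neg_pi_lt_arg (Complex.exp (↑t * v))
  have b4 := Complex.arg_le_pi (Complex.exp (↑t * v))
  have hpi := Real.pi_pos
  have hkl : k = l := by
    have hd : 2 * Real.pi * ((k : ℝ) - l) = (Complex.exp (↑t * u)).arg - (Complex.exp (↑t * v)).arg := by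
      rw [hk, hl, h]; ring
    have h1 : (-1 : ℝ) < (k : ℝ) - l := by
      have := lt_of_mul_lt_mul_left (a := 2 * Real.pi) (b := (-1:ℝ)) (c := (k:ℝ) - l)
        (by rw [hd]; linarith) (by linarith)
      linarith
    have h2 : ((k : ℝ) - l) < 1 := by
      have := lt_of_mul_lt_mul_left (a := 2 * Real.pi) (b := (k:ℝ) - l) (c := (1:ℝ))
        (by rw [hd]; linarith) (by linarith)
      linarith
    have h1' : (-1 : ℤ) < k - l := by exact_mod_cast (by push_cast; linarith : ((-1:ℤ):ℝ) < ((k - l : ℤ) : ℝ))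
    have h2' : (k - l : ℤ) < 1 := by exact_mod_cast (by push_cast; linarith : (((k - l : ℤ)) : ℝ) < ((1:ℤ):ℝ))
    omega
  rw [hk, hl, h, hkl]

/-- The set `Δ_W` associated with `W ⊆ ℂ`. -/
noncomputable def deltaSet (W : Set ℂ) : Set ℝ :=
  {x | ∃ z ∈ W, ∃ w ∈ W, x = 1 + (Complex.arg z - Complex.arg w) / (2 * Real.pi)}


lemma abs_exp_smul (t : ℝ) (z : ℂ) :
    ‖Complex.exp (↑t * z)‖ = Real.exp (t * z.re) := by
  rw [Complex.norm_exp]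
  congr 1
  simp [Complex.mul_re]

lemma mem_span_delta {t : ℝ} {Z : Set ℂ} {u v z₀ : ℂ} (hu : u ∈ Z) (hv : v ∈ Z) (hz₀ : z₀ ∈ Z)
    (hure : u.re = z₀.re) (hvre : v.re = z₀.re) :
    t * (u.im - v.im) / (2 * Real.pi) ∈ Submodule.span ℚ
      (deltaSet (((fun z => Complex.exp (↑t * z)) '' Z)
        ∩ {z | ‖z‖ = Real.exp (t * z₀.re)})) := by
  have hmemu : Complex.exp (↑t * u) ∈ ((fun z => Complex.exp (↑t * z)) '' Z)
      ∩ {z | ‖z‖ = Real.exp (t * z₀.re)} :=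
    ⟨⟨u, hu, rfl⟩, by rw [Set.mem_setOf_eq, abs_exp_smul, hure]⟩
  have hmemv : Complex.exp (↑t * v) ∈ ((fun z => Complex.exp (↑t * z)) '' Z)
      ∩ {z | ‖z‖ = Real.exp (t * z₀.re)} :=
    ⟨⟨v, hv, rfl⟩, by rw [Set.mem_setOf_eq, abs_exp_smul, hvre]⟩
  have h1 : (1 : ℝ) ∈ deltaSet (((fun z => Complex.exp (↑t * z)) '' Z)
      ∩ {z | ‖z‖ = Real.exp (t * z₀.re)}) :=
    ⟨_, hmemu, _, hmemu, by ring⟩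
  have he : 1 + (Complex.arg (Complex.exp (↑t * u)) - Complex.arg (Complex.exp (↑t * v)))
        / (2 * Real.pi) ∈ deltaSet (((fun z => Complex.exp (↑t * z)) '' Z)
      ∩ {z | ‖z‖ = Real.exp (t * z₀.re)}) :=
    ⟨_, hmemu, _, hmemv, rfl⟩
  obtain ⟨k, hk⟩ := arg_exp_real t u
  obtain ⟨l, hl⟩ := arg_exp_real t v
  have hpi := Real.pi_ne_zero
  have heq : t * (u.im - v.im) / (2 * Real.pi)
      = (1 + (Complex.arg (Complex.exp (↑t * u)) - Complex.arg (Complex.exp (↑t * v)))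
        / (2 * Real.pi)) + ((-(1 + k - l) : ℚ) : ℝ) * 1 := by
    rw [hk, hl]
    push_cast
    field_simp
    ring
  rw [heq]
  refine add_mem (Submodule.subset_span he) ?_
  have h2 : ((-(1 + k - l) : ℚ) : ℝ) * 1 = (-(1 + k - l) : ℚ) • (1:ℝ) := by
    rw [Rat.smul_def]
  rw [h2]
  exact Submodule.smul_mem _ _ (Submodule.subset_span h1)

/-- `W ⊆ ℂ` is `b`-nonresonant. -/
noncomputable def BNonresonant (b : ℕ) (W : Set ℂ) : Prop :=
  ∀ r : ℝ, 0 < r → (W ∩ {z | ‖z‖ = r}).Nonempty →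
    (deltaSet (W ∩ {z | ‖z‖ = r}) ∩ Set.range ((↑) : ℚ → ℝ) = {1}) ∧
    Real.logb b r ∉ Submodule.span ℚ (deltaSet (W ∩ {z | ‖z‖ = r}))

/-- `Z ⊆ ℂ` is exponentially `b`-nonresonant. -/
noncomputable def ExpBNonresonant (b : ℕ) (Z : Set ℂ) : Prop :=
  ∃ t : ℝ, 0 ≤ t ∧ BNonresonant b ((fun z => Complex.exp (t * z)) '' Z)

/-- The spectrum (set of complex eigenvalues) of a real square matrix. -/
noncomputable def realSpectrum {d : ℕ} (A : Matrix (Fin d) (Fin d) ℝ) : Set ℂ :=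
  spectrum ℂ (A.map (algebraMap ℝ ℂ))

set_option maxHeartbeats 2000000 in
/-- for countable symmetric exponentially `b`-nonresonant `Z`, the set of
`t ≥ 0` with `e^{tZ}` `b`-resonant is countable. -/
theorem resonant_times_countable (b : ℕ) (hb : 2 ≤ b) (Z : Set ℂ)
    (hc : Z.Countable) (hsym : ∀ z ∈ Z, (starRingEnd ℂ) z ∈ Z)
    (hnr : ExpBNonresonant b Z) :
    Set.Countable {t : ℝ | 0 ≤ t ∧ ¬ BNonresonant b ((fun z => Complex.exp (t * z)) '' Z)} := by
  classical
  obtain ⟨t₀, ht₀, hB0⟩ := hnr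
  set ImD : Set ℝ := (fun p : ℂ × ℂ => p.1.im - p.2.im) '' (Z ×ˢ Z) with hImDdef
  have hImDc : ImD.Countable := (hc.prod hc).image _
  have hspanc : ((Submodule.span ℚ ImD : Submodule ℚ ℝ) : Set ℝ).Countable := by
    haveI := hImDc.to_subtype
    rw [← Subtype.range_coe (s := ImD)]
    have hcnt : Countable (Submodule.span ℚ (Set.range ((↑) : ImD → ℝ))) := inferInstance
    exact Set.countable_coe_iff.mp hcnt
  set A : Set ℝ := (fun p : ℂ × ℝ => p.1.re / Real.log b - p.2 / (2 * Real.pi)) ''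
      (Z ×ˢ ((Submodule.span ℚ ImD : Submodule ℚ ℝ) : Set ℝ)) with hAdef
  have hAc : A.Countable := (hc.prod hspanc).image _
  have hcover : (({0} ∪ ((fun p : ℝ × ℚ => 2 * Real.pi * p.2 / p.1) '' (ImD ×ˢ (Set.univ : Set ℚ)))
      ∪ ((fun p : ℝ × ℚ => (p.2 : ℝ) / p.1) '' (A ×ˢ (Set.univ : Set ℚ)))) : Set ℝ).Countable :=
    ((Set.countable_singleton 0).union ((hImDc.prod (Set.countable_univ)).image _)).union
      ((hAc.prod (Set.countable_univ)).image _)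
  refine Set.Countable.mono ?_ hcover
  rintro t ⟨ht0, hres⟩
  rcases eq_or_lt_of_le ht0 with h | htpos
  · exact Or.inl (Or.inl (by simp [← h]))
  unfold BNonresonant at hres
  push_neg at hres
  obtain ⟨r, hrpos, hne, hfail⟩ := hres
  by_cases hP : deltaSet (((fun z => Complex.exp (↑t * z)) '' Z) ∩ {z | ‖z‖ = r})
      ∩ Set.range ((↑) : ℚ → ℝ) = {1}
  · -- second kind of resonance
    have hmem := hfail hP
    obtain ⟨w0, hw0⟩ := hne
    obtain ⟨⟨z₀, hz₀Z, rfl⟩, habs0⟩ := hw0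
    have hrre : r = Real.exp (t * z₀.re) := by
      rw [← habs0, abs_exp_smul]
    subst hrre
    obtain ⟨n, f, g, hsum⟩ := Submodule.mem_span_set'.mp hmem
    have hdd : ∀ i : Fin n, ∃ u : ℂ, ∃ v : ℂ, u ∈ Z ∧ v ∈ Z ∧ u.re = z₀.re ∧ v.re = z₀.re ∧
        ∃ m : ℤ, (g i : ℝ) = 1 + m + t * (u.im - v.im) / (2 * Real.pi) := by
      intro i
      obtain ⟨zz, ⟨⟨u, huZ, rfl⟩, habsu⟩, ww, ⟨⟨v, hvZ, rfl⟩, habsv⟩, hdeq⟩ := (g i).2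
      have hure : u.re = z₀.re := by
        rw [Set.mem_setOf_eq, abs_exp_smul] at habsu
        exact mul_left_cancel₀ (ne_of_gt htpos) (Real.exp_eq_exp.mp habsu)
      have hvre : v.re = z₀.re := by
        rw [Set.mem_setOf_eq, abs_exp_smul] at habsv
        exact mul_left_cancel₀ (ne_of_gt htpos) (Real.exp_eq_exp.mp habsv)
      obtain ⟨k, hk⟩ := arg_exp_real t u
      obtain ⟨l, hl⟩ := arg_exp_real t v
      refine ⟨u, v, huZ, hvZ, hure, hvre, k - l, ?_⟩
      rw [hdeq, hk, hl]
      have hpi := Real.pi_ne_zero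
      push_cast
      field_simp
      ring
    choose u v huZ hvZ hure hvre m hm using hdd
    set s : ℝ := ∑ i : Fin n, (f i : ℝ) * ((u i).im - (v i).im) with hs
    have hsSpan : s ∈ Submodule.span ℚ ImD := by
      refine Submodule.sum_mem _ fun i _ => ?_
      rw [show ((f i : ℚ) : ℝ) * ((u i).im - (v i).im)
          = (f i) • (((u i).im - (v i).im) : ℝ) from (Rat.smul_def _ _).symm]
      exact Submodule.smul_mem _ _ (Submodule.subset_span ⟨(u i, v i), ⟨huZ i, hvZ i⟩, rfl⟩)
    set β : ℚ := ∑ i : Fin n, f i * (1 + m i) with hβ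
    have hE : t * z₀.re / Real.log b = (β : ℝ) + t * s / (2 * Real.pi) := by
      have h1 : Real.logb b (Real.exp (t * z₀.re)) = t * z₀.re / Real.log b := by
        rw [Real.logb, Real.log_exp]
      rw [← h1, ← hsum]
      have h2 : ∀ i : Fin n, f i • ((g i : ℝ))
          = ((f i * (1 + m i) : ℚ) : ℝ) + t * ((f i : ℝ) * ((u i).im - (v i).im)) / (2 * Real.pi) := by
        intro i
        rw [Rat.smul_def, hm i]
        push_cast
        ring
      rw [Finset.sum_congr rfl (fun i _ => h2 i), Finset.sum_add_distrib, hβ, hs,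
        Finset.mul_sum, Finset.sum_div]
      push_cast
      ring
    set α : ℝ := z₀.re / Real.log b - s / (2 * Real.pi) with hα
    have hαt : α * t = β := by
      have h3 : α * t = t * z₀.re / Real.log b - t * s / (2 * Real.pi) := by
        rw [hα]; ring
      rw [h3, hE]; ring
    by_cases hαz : α = 0
    · exfalso
      have hr0pos : (0:ℝ) < Real.exp (t₀ * z₀.re) := Real.exp_pos _
      have hmem0 : Complex.exp (↑t₀ * z₀) ∈ ((fun z => Complex.exp (↑t₀ * z)) '' Z)
          ∩ {z | ‖z‖ = Real.exp (t₀ * z₀.re)} :=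
        ⟨⟨z₀, hz₀Z, rfl⟩, by rw [Set.mem_setOf_eq, abs_exp_smul]⟩
      have hne0 : (((fun z => Complex.exp (↑t₀ * z)) '' Z)
          ∩ {z | ‖z‖ = Real.exp (t₀ * z₀.re)}).Nonempty := ⟨_, hmem0⟩
      obtain ⟨-, h2⟩ := hB0 (Real.exp (t₀ * z₀.re)) hr0pos hne0
      apply h2
      have hzs : z₀.re / Real.log b = s / (2 * Real.pi) := by
        have := hαz
        rw [hα] at this
        linarith
      have hlogb0 : Real.logb b (Real.exp (t₀ * z₀.re)) = t₀ * (s / (2 * Real.pi)) := by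
        rw [Real.logb, Real.log_exp, mul_div_assoc, hzs]
      rw [hlogb0]
      have h4 : t₀ * (s / (2 * Real.pi))
          = ∑ i : Fin n, (f i) • (t₀ * ((u i).im - (v i).im) / (2 * Real.pi)) := by
        rw [hs, Finset.sum_div, Finset.mul_sum]
        refine Finset.sum_congr rfl fun i _ => ?_
        rw [Rat.smul_def]
        ring
      rw [h4]
      exact Submodule.sum_mem _ fun i _ => Submodule.smul_mem _ _
        (mem_span_delta (huZ i) (hvZ i) hz₀Z (hure i) (hvre i))
    · refine Or.inr ⟨(α, β), ⟨⟨(z₀, s), ⟨hz₀Z, hsSpan⟩, rfl⟩, trivial⟩, ?_⟩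
      field_simp
      linarith [hαt]
  · -- first kind of resonance
    refine Or.inl (Or.inr ?_)
    have h1mem : (1 : ℝ) ∈ deltaSet (((fun z => Complex.exp (↑t * z)) '' Z)
        ∩ {z | ‖z‖ = r}) ∩ Set.range ((↑) : ℚ → ℝ) := by
      obtain ⟨w0, hw0⟩ := hne
      exact ⟨⟨w0, hw0, w0, hw0, by ring⟩, 1, by norm_num⟩
    have hnsub : ¬ (deltaSet (((fun z => Complex.exp (↑t * z)) '' Z) ∩ {z | ‖z‖ = r})
        ∩ Set.range ((↑) : ℚ → ℝ) ⊆ {1}) :=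
      fun hsub => hP (hsub.antisymm (Set.singleton_subset_iff.mpr h1mem))
    obtain ⟨x, hx, hx1⟩ := Set.not_subset.mp hnsub
    obtain ⟨⟨zz, hzz, ww, hww, hxeq⟩, q, hq⟩ := hx
    obtain ⟨⟨uu, huZ, rfl⟩, habsu⟩ := hzz
    obtain ⟨⟨vv, hvZ, rfl⟩, habsv⟩ := hww
    obtain ⟨k, hk⟩ := arg_exp_real t uu
    obtain ⟨l, hl⟩ := arg_exp_real t vv
    have him : uu.im ≠ vv.im := by
      intro hh
      apply hx1
      rw [Set.mem_singleton_iff, hxeq, arg_exp_eq_of_im_eq t hh]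
      ring
    refine ⟨(uu.im - vv.im, q - 1 - k + l), ⟨⟨(uu, vv), ⟨huZ, hvZ⟩, rfl⟩, trivial⟩, ?_⟩
    have hq' : (q : ℝ) = 1 + ((t * uu.im + 2 * Real.pi * k) - (t * vv.im + 2 * Real.pi * l))
        / (2 * Real.pi) := by
      rw [hq, hxeq, hk, hl]
    have hd : uu.im - vv.im ≠ 0 := sub_ne_zero.mpr him
    have hpi := Real.pi_ne_zero
    have ht' : t * (uu.im - vv.im) = 2 * Real.pi * ((q : ℝ) - 1 - k + l) := by
      field_simp at hq'
      linarith
    push_cast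
    field_simp
    linarith [ht']
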